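/- The equilateral Livné parameter satisfies the DAHA trace condition: for every φ ∈ ℝ, the number τ = e^{2iφ/3} + e^{−iφ/3} satisfies |τ|² = 4cos²(φ/2) and 3 + τ³ − 3|τ|² = e^{2iφ} − 2e^{−iφ}. Consequently, taking u = v = w = τ in the Livné matrices, one has Tr(I₁I₂I₃) = e^{2iφ} − 2e^{−iφ} and the characteristic polynomial of I₁I₂ equals (λ − 1)·(λ² − 2cos(φ)·λ + 1), i.e., I₁I₂ has eigenvalues {1, e^{iφ}, e^{−iφ}}. -/

import Mathlib

open Matrix Polynomial

/-- The Livné generator `I₁ = [[1, u, v̄],[0, −1, 0],[0, 0, −1]]`. -/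
noncomputable def livneI1 (u v w : ℂ) : Matrix (Fin 3) (Fin 3) ℂ :=
  !![1, u, starRingEnd ℂ v; 0, -1, 0; 0, 0, -1]

/-- The Livné generator `I₂ = [[−1, 0, 0],[ū, 1, w],[0, 0, −1]]`. -/
noncomputable def livneI2 (u v w : ℂ) : Matrix (Fin 3) (Fin 3) ℂ :=
  !![-1, 0, 0; starRingEnd ℂ u, 1, w; 0, 0, -1]

/-- The Livné generator `I₃ = [[−1, 0, 0],[0, −1, 0],[v, w̄, 1]]`. -/
noncomputable def livneI3 (u v w : ℂ) : Matrix (Fin 3) (Fin 3) ℂ :=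
  !![-1, 0, 0; 0, -1, 0; v, starRingEnd ℂ w, 1]

/-- The equilateral Livné parameter `τ = e^{2iφ/3} + e^{−iφ/3}` satisfies
`|τ|² = 4cos²(φ/2)` and the DAHA trace condition
`3 + τ³ − 3|τ|² = e^{2iφ} − 2e^{−iφ}`; hence with `u = v = w = τ` one has
`Tr(I₁I₂I₃) = e^{2iφ} − 2e^{−iφ}` and
`charpoly(I₁I₂) = (λ−1)(λ² − 2cos(φ)·λ + 1)`. -/
theorem stmt18 (φ : ℝ) (τ : ℂ)
    (hτ : τ = Complex.exp (2 * φ * Complex.I / 3) + Complex.exp (-φ * Complex.I / 3)) :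
    Complex.normSq τ = 4 * Real.cos (φ / 2) ^ 2 ∧
    3 + τ ^ 3 - 3 * ((Complex.normSq τ : ℝ) : ℂ) =
      Complex.exp (2 * φ * Complex.I) - 2 * Complex.exp (-φ * Complex.I) ∧
    (livneI1 τ τ τ * livneI2 τ τ τ * livneI3 τ τ τ).trace =
      Complex.exp (2 * φ * Complex.I) - 2 * Complex.exp (-φ * Complex.I) ∧
    (livneI1 τ τ τ * livneI2 τ τ τ).charpoly =
      (X - 1) * (X ^ 2 - C ((2 * Real.cos φ : ℝ) : ℂ) * X + 1) := by
  set a : ℂ := Complex.exp (φ * Complex.I / 3) with ha_def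
  have ha : a ≠ 0 := Complex.exp_ne_zero _
  have hτ' : τ = a ^ 2 + a⁻¹ := by
    rw [hτ, show (2 * (φ:ℂ) * Complex.I / 3) = (φ:ℂ) * Complex.I / 3 + (φ:ℂ) * Complex.I / 3 by
      ring, Complex.exp_add, show (-(φ:ℂ) * Complex.I / 3) = -((φ:ℂ) * Complex.I / 3) by ring,
      Complex.exp_neg, sq]
  have hconj : starRingEnd ℂ a = a⁻¹ := by
    have hc3 : starRingEnd ℂ ((φ:ℂ) * Complex.I / 3) = -((φ:ℂ) * Complex.I / 3) := by
      simp [map_div₀, map_ofNat]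
      ring
    rw [ha_def, ← Complex.exp_conj, hc3, Complex.exp_neg]
  have hct : starRingEnd ℂ τ = (a ^ 2)⁻¹ + a := by
    rw [hτ', map_add, map_pow, map_inv₀, hconj, inv_pow, inv_inv]
  have hs : ((Complex.normSq τ : ℝ) : ℂ) = 2 + a ^ 3 + (a ^ 3)⁻¹ := by
    rw [← Complex.mul_conj, hct, hτ']
    field_simp
    ring
  have e2 : Complex.exp (2 * φ * Complex.I) = a ^ 6 := by
    rw [show (2 * (φ:ℂ) * Complex.I) = ((6:ℕ):ℂ) * ((φ:ℂ) * Complex.I / 3) by push_cast; ring,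
      Complex.exp_nat_mul]
  have e1 : Complex.exp (φ * Complex.I) = a ^ 3 := by
    rw [show ((φ:ℂ) * Complex.I) = ((3:ℕ):ℂ) * ((φ:ℂ) * Complex.I / 3) by push_cast; ring,
      Complex.exp_nat_mul]
  have em1 : Complex.exp (-φ * Complex.I) = (a ^ 3)⁻¹ := by
    rw [show (-(φ:ℂ) * Complex.I) = -(((3:ℕ):ℂ) * ((φ:ℂ) * Complex.I / 3)) by push_cast; ring,
      Complex.exp_neg, Complex.exp_nat_mul]
  refine ⟨?_, ?_, ?_, ?_⟩
  · have hcos : 4 * Real.cos (φ / 2) ^ 2 = 2 + 2 * Real.cos φ := by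
      rw [Real.cos_sq]
      rw [show 2 * (φ / 2) = φ by ring]
      ring
    rw [hcos]
    apply Complex.ofReal_injective
    rw [hs]
    push_cast
    rw [show ((2:ℂ) + 2 * Complex.cos φ) = 2 + (Complex.exp (φ * Complex.I) + Complex.exp (-φ * Complex.I)) by rw [← Complex.two_cos]]
    rw [e1, em1]
    ring
  · rw [hs, hτ', e2, em1]
    field_simp
    ring
  · have hτd : τ = (a ^ 3 + 1) / a := by rw [hτ']; field_simp
    have hctd : starRingEnd ℂ τ = (1 + a ^ 3) / a ^ 2 := by rw [hct]; field_simp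
    rw [livneI1, livneI2, livneI3, Matrix.mul_fin_three, Matrix.mul_fin_three,
      Matrix.trace_fin_three_of, hctd, hτd, e2, em1]
    field_simp
    have hc : a⁻¹ ^ 8 * a ^ 8 = 1 := by
      rw [inv_pow]; exact inv_mul_cancel₀ (pow_ne_zero _ ha)
    ring
  · have hM : livneI1 τ τ τ * livneI2 τ τ τ =
        !![-1 + τ * starRingEnd ℂ τ, τ, τ * τ + -starRingEnd ℂ τ;
           -starRingEnd ℂ τ, -1, -τ; 0, 0, 1] := by
      rw [livneI1, livneI2, Matrix.mul_fin_three]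
      norm_num
    have hcc : C τ * C (starRingEnd ℂ τ) = C (((Complex.normSq τ : ℝ) : ℂ)) := by
      rw [← C_mul, Complex.mul_conj]
    have h2c : (((2 * Real.cos φ : ℝ)) : ℂ) = ((Complex.normSq τ : ℝ) : ℂ) - 2 := by
      rw [hs]
      push_cast
      rw [Complex.two_cos, e1, em1]
      ring
    rw [hM, h2c, Matrix.charpoly, Matrix.det_fin_three]
    simp [Matrix.charmatrix, Matrix.scalar_apply, Matrix.sub_apply, Matrix.map_apply,
      Matrix.diagonal, Matrix.cons_val_zero, Matrix.cons_val_one, Matrix.head_cons,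
      Matrix.cons_val_two, Matrix.tail_cons, Matrix.of_apply, map_add, map_neg,
      _root_.map_mul, map_ofNat, map_sub, C_0, C_1]
    linear_combination (-(X - 1) * X) * hcc
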